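/- For every rational r with denominator 2 and r > 1, there exists m ≥ 0 such that f^(j)(r) is an integer for all j ≥ m, where f(x) = x·⌈x⌉. -/

import Mathlib

private def gIter : ℚ → ℚ := fun x : ℚ => x * (⌈x⌉ : ℚ)

private lemma gIter_int (n : ℤ) : gIter (n : ℚ) = ((n * n : ℤ) : ℚ) := by
  simp [gIter]

private lemma gIter_iter_int (k : ℕ) (n : ℤ) : ∃ n' : ℤ, gIter^[k] (n : ℚ) = n' := by
  induction k generalizing n with
  | zero => exact ⟨n, rfl⟩
  | succ k ih =>
    rw [Function.iterate_succ_apply, gIter_int]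
    exact ih _

private lemma ceil_half (k : ℤ) : ⌈((2 * k + 1 : ℤ) : ℚ) / 2⌉ = k + 1 := by
  rw [Int.ceil_eq_iff]
  push_cast
  constructor <;> linarith

private lemma key : ∀ e : ℕ, ∀ t : ℤ, Odd t → 3 ≤ t → ¬ ((2:ℤ)^(e+2) ∣ t - 1) →
    ∃ m : ℕ, ∃ n : ℤ, gIter^[m] ((t : ℚ) / 2) = n := by
  intro e
  induction e with
  | zero =>
    intro t ht h3 hdvd
    obtain ⟨k, hk⟩ := ht
    rcases Int.even_or_odd k with ⟨a, ha⟩ | ⟨a, ha⟩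
    · exact absurd ⟨a, by omega⟩ hdvd
    · refine ⟨1, (4*a+3)*(a+1), ?_⟩
      subst hk ha
      rw [Function.iterate_one]
      show ((2*(2*a+1)+1 : ℤ) : ℚ) / 2 * (⌈((2*(2*a+1)+1 : ℤ) : ℚ) / 2⌉ : ℚ) = _
      rw [ceil_half (2*a+1)]
      push_cast
      ring
  | succ e ih =>
    intro t ht h3 hdvd
    obtain ⟨k, hk⟩ := ht
    rcases Int.even_or_odd k with ⟨a, ha⟩ | ⟨a, ha⟩
    · -- t = 4a+1 case; pass to t' = t(t+1)/2
      subst hk ha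
      have ha1 : 1 ≤ a := by omega
      set t' : ℤ := 8*a^2 + 6*a + 1 with ht'
      have hodd' : Odd t' := ⟨4*a^2 + 3*a, by ring⟩
      have h3' : 3 ≤ t' := by nlinarith
      have hdvd' : ¬ ((2:ℤ)^(e+2) ∣ t' - 1) := by
        intro hd
        have heq : t' - 1 = (2*a) * (4*a+3) := by ring
        rw [heq] at hd
        have hcop : IsCoprime ((2:ℤ)^(e+2)) (4*a+3) := by
          refine IsCoprime.pow_left ?_
          exact (Int.prime_two.coprime_iff_not_dvd).mpr (by omega)
        have h2a : (2:ℤ)^(e+2) ∣ 2*a := hcop.dvd_of_dvd_mul_right hd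
        apply hdvd
        obtain ⟨c, hc⟩ := h2a
        exact ⟨c, by linear_combination 2*hc⟩
      obtain ⟨m, n, hmn⟩ := ih t' hodd' h3' hdvd'
      refine ⟨m + 1, n, ?_⟩
      rw [Function.iterate_succ_apply]
      have hstep : gIter (((2*(a+a)+1 : ℤ) : ℚ) / 2) = ((t' : ℤ) : ℚ) / 2 := by
        show ((2*(a+a)+1 : ℤ) : ℚ) / 2 * (⌈((2*(a+a)+1 : ℤ) : ℚ) / 2⌉ : ℚ) = _
        have : ((2*(a+a)+1 : ℤ) : ℚ) = ((2*(a+a)+1 : ℤ) : ℚ) := rfl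
        have hc : ⌈((2*(a+a)+1 : ℤ) : ℚ) / 2⌉ = (a+a) + 1 := by
          have := ceil_half (a+a)
          convert this using 3
        rw [hc, ht']
        push_cast
        ring
      rw [hstep]
      exact hmn
    · refine ⟨1, (4*a+3)*(a+1), ?_⟩
      subst hk ha
      rw [Function.iterate_one]
      show ((2*(2*a+1)+1 : ℤ) : ℚ) / 2 * (⌈((2*(2*a+1)+1 : ℤ) : ℚ) / 2⌉ : ℚ) = _
      rw [ceil_half (2*a+1)]
      push_cast
      ring

/-- Conjecture 1 for denominator 2: if `r > 1`, `r` is not an integer but `2r` is an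
integer, then the iterates of `f x = x * ⌈x⌉` starting from `r` are eventually integers. -/
theorem approx_squaring_den_two_eventually_int (r : ℚ) (hr : 1 < r)
    (hden : ¬ ∃ n : ℤ, r = n) (h2 : ∃ n : ℤ, 2 * r = n) :
    ∃ m : ℕ, ∀ j : ℕ, m ≤ j →
      ∃ n : ℤ, (fun x : ℚ => x * (⌈x⌉ : ℚ))^[j] r = n := by
  obtain ⟨t, ht⟩ := h2
  have hodd : Odd t := by
    rcases Int.even_or_odd t with ⟨s, hs⟩ | h
    · exact absurd ⟨s, by subst hs; push_cast at ht ⊢; linarith⟩ hden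
    · exact h
  have h3 : 3 ≤ t := by
    have : (2:ℚ) < (t:ℚ) := by linarith
    have h2t : (2:ℤ) < t := by exact_mod_cast this
    omega
  have hrt : r = (t : ℚ) / 2 := by linarith
  have hdvd : ¬ ((2:ℤ)^((t-1).toNat + 2) ∣ t - 1) := by
    intro hd
    have hle : (2:ℤ)^((t-1).toNat + 2) ≤ t - 1 := Int.le_of_dvd (by omega) hd
    have h1 : ((t-1).toNat : ℤ) = t - 1 := Int.toNat_of_nonneg (by omega)
    have h2p : (t-1).toNat < 2^((t-1).toNat) := Nat.lt_two_pow_self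
    have h2p' : ((t-1).toNat : ℤ) < 2^((t-1).toNat) := by exact_mod_cast h2p
    have hmono : (2:ℤ)^((t-1).toNat) ≤ 2^((t-1).toNat + 2) :=
      pow_le_pow_right₀ (by norm_num) (by omega)
    omega
  obtain ⟨m, n, hmn⟩ := key ((t-1).toNat) t hodd h3 hdvd
  refine ⟨m, fun j hj => ?_⟩
  show ∃ n : ℤ, gIter^[j] r = n
  obtain ⟨d, hd⟩ : ∃ d, j = d + m := ⟨j - m, by omega⟩
  subst hd
  rw [Function.iterate_add_apply, hrt, hmn]
  exact gIter_iter_int d n
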